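/- Divisor-level form of Corollary 3.8: let T0 be a trope, let a : N → ℕ be a function on the 16 nodes, and set D = Σ_{E ∈ N} a(E)·E + T0 in the free ℤ-module on the nodes and tropes. Call D' a nonzero effective subdivisor of D if D' = Σ_{E ∈ N} a'(E)·E + ε·T0 with 0 ≤ a'(E) ≤ a(E) for all E, ε ∈ {0,1}, and D' ≠ 0. Then D has no nonzero effective subdivisor D' with σD' = D' if and only if σ(T0) is not in the support of a. -/

import Mathlib

/-!
The Kummer configuration of the 16 nodes and 16 tropes of a Jacobian Kummer
surface.  Nodes are indexed (0-indexed, so the paper's index `i` is `i-1 : Fin 6`)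
by the subsets `∅` (for `E_0`) and `{i,j}` (for `E_{ij}`) of `Fin 6`; tropes by
the subsets `{i}` (for `T_i`) and `{i,j,5}` (for `T_{ij6}`).
-/

/-- Subsets of `{1,…,6}` (0-indexed as `Fin 6`) indexing curve classes. -/
abbrev Idx : Type := Finset (Fin 6)

/-- Node indices: `E_0` is indexed by `∅` and `E_{ij}` by `{i,j}`. -/
def IsNode (S : Idx) : Prop := S.card = 0 ∨ S.card = 2

/-- Trope indices: `T_i` is indexed by `{i}` and `T_{ij6}` by `{i,j,6}`
(0-indexed: `6` becomes `5`). -/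
def IsTrope (S : Idx) : Prop := S.card = 1 ∨ (S.card = 3 ∧ (5 : Fin 6) ∈ S)

instance : DecidablePred IsNode :=
  fun S => inferInstanceAs (Decidable (S.card = 0 ∨ S.card = 2))

instance : DecidablePred IsTrope :=
  fun S => inferInstanceAs (Decidable (S.card = 1 ∨ (S.card = 3 ∧ (5 : Fin 6) ∈ S)))

/-- The 16 nodes. -/
abbrev NodeIdx : Type := {S : Idx // IsNode S}

/-- The 16 tropes. -/
abbrev TropeIdx : Type := {S : Idx // IsTrope S}

/-- The 32-element index set `N ⊔ T` of nodes and tropes. -/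
abbrev Curve : Type := NodeIdx ⊕ TropeIdx

/-- Intersection number of the node indexed by `S` with the trope indexed by `U`:
`(E_0·T_i) = 1`, `(E_0·T_{ij6}) = 0`, `(E_{ij}·T_k) = 1` iff `k ∈ {i,j}`,
`(E_{ij}·T_{kl6}) = 1` iff `{i,j} ⊆ {k,l,6}` or `{i,j} ∩ {k,l,6} = ∅`. -/
def nodeTropePairing (S U : Idx) : ℤ :=
  if S = ∅ then (if U.card = 1 then 1 else 0)
  else if U.card = 1 then (if U ⊆ S then 1 else 0)
  else if S ⊆ U ∨ S ∩ U = ∅ then 1 else 0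

/-- The Gram matrix of the Kummer configuration: distinct nodes are disjoint,
distinct tropes are disjoint, every node and trope has self-intersection `-2`,
and nodes meet tropes according to `nodeTropePairing`. -/
def gram : Curve → Curve → ℤ
  | Sum.inl E, Sum.inl E' => if E = E' then -2 else 0
  | Sum.inr T, Sum.inr T' => if T = T' then -2 else 0
  | Sum.inl E, Sum.inr T => nodeTropePairing E.1 T.1
  | Sum.inr T, Sum.inl E => nodeTropePairing E.1 T.1

/-- The free `ℤ`-module on the 32-element set of nodes and tropes. -/
abbrev L : Type := Curve → ℤ

/-- The basis element of `L` corresponding to a node or trope. -/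
def e (c : Curve) : L := fun d => if d = c then 1 else 0

/-- The symmetric bilinear intersection form on `L` given by the Gram matrix. -/
def B (x y : L) : ℤ := ∑ c : Curve, ∑ d : Curve, x c * gram c d * y d

/-- The Enriques involution on index sets, given by the table
`E_0 ↔ T_{456}`, `E_{12} ↔ T_3`, `E_{13} ↔ T_2`, `E_{14} ↔ T_{156}`,
`E_{15} ↔ T_{146}`, `E_{16} ↔ T_{236}`, `E_{23} ↔ T_1`, `E_{24} ↔ T_{256}`,
`E_{25} ↔ T_{246}`, `E_{26} ↔ T_{136}`, `E_{34} ↔ T_{356}`, `E_{35} ↔ T_{346}`,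
`E_{36} ↔ T_{126}`, `E_{45} ↔ T_6`, `E_{46} ↔ T_5`, `E_{56} ↔ T_4`
(all written 0-indexed below). -/
def thetaSet (S : Idx) : Idx :=
  if S = (∅ : Idx) then {3, 4, 5} else
  if S = {0, 1} then {2} else
  if S = {0, 2} then {1} else
  if S = {0, 3} then {0, 4, 5} else
  if S = {0, 4} then {0, 3, 5} else
  if S = {0, 5} then {1, 2, 5} else
  if S = {1, 2} then {0} else
  if S = {1, 3} then {1, 4, 5} else
  if S = {1, 4} then {1, 3, 5} else
  if S = {1, 5} then {0, 2, 5} else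
  if S = {2, 3} then {2, 4, 5} else
  if S = {2, 4} then {2, 3, 5} else
  if S = {2, 5} then {0, 1, 5} else
  if S = {3, 4} then {5} else
  if S = {3, 5} then {4} else
  if S = {4, 5} then {3} else
  if S = {3, 4, 5} then (∅ : Idx) else
  if S = {2} then {0, 1} else
  if S = {1} then {0, 2} else
  if S = {0, 4, 5} then {0, 3} else
  if S = {0, 3, 5} then {0, 4} else
  if S = {1, 2, 5} then {0, 5} else
  if S = {0} then {1, 2} else
  if S = {1, 4, 5} then {1, 3} else
  if S = {1, 3, 5} then {1, 4} else
  if S = {0, 2, 5} then {1, 5} else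
  if S = {2, 4, 5} then {2, 3} else
  if S = {2, 3, 5} then {2, 4} else
  if S = {0, 1, 5} then {2, 5} else
  if S = {5} then {3, 4} else
  if S = {4} then {3, 5} else
  if S = {3} then {4, 5} else S

theorem thetaSet_isTrope : ∀ S : Idx, IsNode S → IsTrope (thetaSet S) := by decide

theorem thetaSet_isNode : ∀ S : Idx, IsTrope S → IsNode (thetaSet S) := by decide

/-- The trope `θ(E)` associated to a node `E`. -/
def thetaTrope (E : NodeIdx) : TropeIdx := ⟨thetaSet E.1, thetaSet_isTrope E.1 E.2⟩

/-- The node `θ(T)` associated to a trope `T`. -/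
def thetaNode (T : TropeIdx) : NodeIdx := ⟨thetaSet T.1, thetaSet_isNode T.1 T.2⟩

/-- The Enriques involution `σ` as a permutation of the 32 curve classes. -/
def theta : Curve → Curve
  | Sum.inl E => Sum.inr (thetaTrope E)
  | Sum.inr T => Sum.inl (thetaNode T)

/-- The `ℤ`-linear extension of `theta` to the free module `L`,
sending the basis element `e c` to `e (theta c)`. -/
def sigma (x : L) : L := fun d => ∑ c : Curve, if theta c = d then x c else 0


lemma thetaSet_invol : ∀ S : Idx, IsNode S ∨ IsTrope S → thetaSet (thetaSet S) = S := by decide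

lemma thetaTrope_thetaNode (T : TropeIdx) : thetaTrope (thetaNode T) = T := by
  apply Subtype.ext
  exact thetaSet_invol T.1 (Or.inr T.2)

lemma sigma_e (c : Curve) : sigma (e c) = e (theta c) := by
  funext d
  unfold sigma e
  rw [Finset.sum_eq_single c]
  · simp [eq_comm]
  · intro b _ hb; simp [hb]
  · simp

lemma sigma_add (x y : L) : sigma (x + y) = sigma x + sigma y := by
  funext d
  simp only [sigma, Pi.add_apply, ← Finset.sum_add_distrib]
  apply Finset.sum_congr rfl
  intro c _
  split <;> simp

lemma coeff_node (a' : NodeIdx → ℕ) (z : ℤ) (T0 : TropeIdx) (E' : NodeIdx) :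
    ((∑ E : NodeIdx, (a' E : ℤ) • e (Sum.inl E)) + z • e (Sum.inr T0)) (Sum.inl E')
      = (a' E' : ℤ) := by
  simp [e, Finset.sum_apply]

lemma coeff_trope (a' : NodeIdx → ℕ) (z : ℤ) (T0 T : TropeIdx) :
    ((∑ E : NodeIdx, (a' E : ℤ) • e (Sum.inl E)) + z • e (Sum.inr T0)) (Sum.inr T)
      = if T = T0 then z else 0 := by
  simp [e, Finset.sum_apply]

lemma sigma_apply_node (x : L) (n : NodeIdx) :
    sigma x (Sum.inl n) = ∑ T : TropeIdx, if thetaNode T = n then x (Sum.inr T) else 0 := by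
  unfold sigma
  rw [Fintype.sum_sum_type]
  simp [theta]

/-- divisor-level form of Corollary 3.8: for `D = Σ_E a(E)·E + T0`,
`D` has no nonzero effective subdivisor `D' = Σ_E a'(E)·E + ε·T0`
(with `a' ≤ a` and `ε ∈ {0,1}`) satisfying `σD' = D'`, if and only if the node
`σ(T0)` is not in the support of `a`. -/
theorem no_invariant_subdivisor_iff (T0 : TropeIdx) (a : NodeIdx → ℕ)
    (D : L) (hD : D = (∑ E : NodeIdx, (a E : ℤ) • e (Sum.inl E)) + e (Sum.inr T0)) :
    (∀ (a' : NodeIdx → ℕ) (ε : ℕ), (∀ E : NodeIdx, a' E ≤ a E) → (ε = 0 ∨ ε = 1) →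
      ∀ D' : L, D' = (∑ E : NodeIdx, (a' E : ℤ) • e (Sum.inl E)) + (ε : ℤ) • e (Sum.inr T0) →
        D' ≠ 0 → sigma D' ≠ D') ↔
    a (thetaNode T0) = 0 := by
  constructor
  · -- LHS → a (thetaNode T0) = 0
    intro H
    by_contra hne
    set n := thetaNode T0 with hn
    have hD'eq : (∑ E : NodeIdx, ((if E = n then (1:ℕ) else 0 : ℕ) : ℤ) • e (Sum.inl E))
        + ((1:ℕ) : ℤ) • e (Sum.inr T0) = e (Sum.inl n) + e (Sum.inr T0) := by
      congr 1
      · have key : ∀ E : NodeIdx, ((if E = n then (1:ℕ) else 0 : ℕ) : ℤ) • e (Sum.inl E)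
            = if E = n then e (Sum.inl n) else 0 := by
          intro E; by_cases h : E = n
          · rw [if_pos h, if_pos h, h]; simp
          · rw [if_neg h, if_neg h]; simp
        rw [Finset.sum_congr rfl (fun E _ => key E), Finset.sum_ite_eq']
        rw [if_pos (Finset.mem_univ n)]
      · simp
    refine H (fun E => if E = n then 1 else 0) 1 ?_ (Or.inr rfl)
      (e (Sum.inl n) + e (Sum.inr T0)) hD'eq.symm ?_ ?_
    · intro E
      split
      · next h => subst h; omega
      · exact Nat.zero_le _
    · intro h0
      have := congrFun h0 (Sum.inr T0)
      simp [e] at this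
    · rw [sigma_add, sigma_e, sigma_e]
      show e (Sum.inr (thetaTrope n)) + e (Sum.inl (thetaNode T0)) = _
      rw [hn, thetaTrope_thetaNode]
      exact add_comm _ _
  · intro h a' ε ha' hε D' hD' hne heq
    set n := thetaNode T0 with hn
    have hnode : ∀ E', D' (Sum.inl E') = (a' E' : ℤ) := fun E' => by
      rw [hD']; exact coeff_node a' _ T0 E'
    have htrope : ∀ T, D' (Sum.inr T) = if T = T0 then (ε : ℤ) else 0 := fun T => by
      rw [hD']; exact coeff_trope a' _ T0 T
    have ha'n : a' n = 0 := Nat.le_zero.mp (h ▸ ha' n)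
    have hsum : ∑ T : TropeIdx, (if thetaNode T = n then D' (Sum.inr T) else 0) = 0 := by
      have := congrFun heq (Sum.inl n)
      rw [sigma_apply_node, hnode, ha'n] at this
      simpa using this
    have hnonneg : ∀ T ∈ Finset.univ, (0:ℤ) ≤ if thetaNode T = n then D' (Sum.inr T) else 0 := by
      intro T _
      rw [htrope]
      split
      · split
        · exact Int.natCast_nonneg ε
        · exact le_refl 0
      · exact le_refl 0
    have hT0 := (Finset.sum_eq_zero_iff_of_nonneg hnonneg).mp hsum T0 (Finset.mem_univ T0)
    rw [if_pos rfl, htrope, if_pos rfl] at hT0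
    have hε0 : ε = 0 := Nat.cast_eq_zero.mp hT0
    have ha'0 : ∀ E', a' E' = 0 := by
      intro E'
      have := congrFun heq (Sum.inl E')
      rw [sigma_apply_node, hnode] at this
      have hz : ∑ T : TropeIdx, (if thetaNode T = E' then D' (Sum.inr T) else 0) = 0 := by
        apply Finset.sum_eq_zero
        intro T _
        rw [htrope, hε0]
        simp
      rw [hz] at this
      exact_mod_cast this.symm
    apply hne
    funext d
    cases d with
    | inl E' => rw [hnode, ha'0]; rfl
    | inr T => rw [htrope, hε0]; simp
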